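/- Let 1 ≤ p < ∞ and let H be a separable complex Hilbert space. For every u ∈ U^p(ℝ;H) and every ε > 0, there exists a finite partition P of ℝ such that ‖u - u_P‖_{U^p(ℝ;H)} < ε; moreover, every finite partition P' refining P also satisfies ‖u - u_{P'}‖_{U^p(ℝ;H)} < ε. -/

import Mathlib

open Filter

/-- A `U^p`-atom. -/
def IsUpAtom {H : Type*} [NormedAddCommGroup H] (p : ℝ) (a : ℝ → H) : Prop :=
  ∃ (K : ℕ) (t : Fin (K + 1) → EReal) (φ : Fin K → H),
    StrictMono t ∧ t 0 ≠ ⊥ ∧ (∑ k, ‖φ k‖ ^ p) = 1 ∧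
    ∀ x : ℝ, a x = ∑ k : Fin K,
      if t k.castSucc ≤ (x : EReal) ∧ (x : EReal) < t k.succ then φ k else 0

/-- An atomic representation of `u` in `U^p`. -/
def IsUpRep {H : Type*} [NormedAddCommGroup H] [InnerProductSpace ℂ H]
    (p : ℝ) (u : ℝ → H) (c : ℕ → ℂ) (a : ℕ → ℝ → H) : Prop :=
  Summable (fun j => ‖c j‖) ∧ (∀ j, IsUpAtom p (a j)) ∧
    TendstoUniformly (fun N x => ∑ j ∈ Finset.range N, c j • a j x) u atTop

/-- Membership in the atomic space `U^p(ℝ;H)`. -/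
def MemUp {H : Type*} [NormedAddCommGroup H] [InnerProductSpace ℂ H]
    (p : ℝ) (u : ℝ → H) : Prop :=
  ∃ c a, IsUpRep p u c a

/-- The `U^p(ℝ;H)` norm. -/
noncomputable def UpNorm {H : Type*} [NormedAddCommGroup H] [InnerProductSpace ℂ H]
    (p : ℝ) (u : ℝ → H) : ℝ :=
  sInf { r | ∃ c a, IsUpRep p u c a ∧ r = ∑' j, ‖c j‖ }

/-- The restriction norm `‖u‖_{U^p(I)}`. -/
noncomputable def UpNormOn {H : Type*} [NormedAddCommGroup H] [InnerProductSpace ℂ H]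
    (p : ℝ) (I : Set ℝ) (u : ℝ → H) : ℝ :=
  sInf { r | ∃ v : ℝ → H, MemUp p v ∧ Set.EqOn v u I ∧ r = UpNorm p v }

/-- `u` restricted to `I` extends to an element of `U^p(ℝ;H)`. -/
def MemUpOn {H : Type*} [NormedAddCommGroup H] [InnerProductSpace ℂ H]
    (p : ℝ) (I : Set ℝ) (u : ℝ → H) : Prop :=
  ∃ v : ℝ → H, MemUp p v ∧ Set.EqOn v u I

/-- The set of `V^p` partition sums. -/
def VpSums {H : Type*} [NormedAddCommGroup H] (p : ℝ) (u : ℝ → H) : Set ℝ :=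
  { r | ∃ (K : ℕ) (t : Fin (K + 1) → ℝ), StrictMono t ∧
      (r = (∑ k : Fin K, ‖u (t k.succ) - u (t k.castSucc)‖ ^ p) ^ (1 / p) ∨
       r = (∑ k : Fin K, ‖u (t k.succ) - u (t k.castSucc)‖ ^ p
              + ‖u (t (Fin.last K))‖ ^ p) ^ (1 / p)) }

def MemVp {H : Type*} [NormedAddCommGroup H] (p : ℝ) (u : ℝ → H) : Prop :=
  BddAbove (VpSums p u)

noncomputable def VpNorm {H : Type*} [NormedAddCommGroup H] (p : ℝ) (u : ℝ → H) : ℝ :=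
  sSup (VpSums p u)

def MemVpRC {H : Type*} [NormedAddCommGroup H] (p : ℝ) (u : ℝ → H) : Prop :=
  MemVp p u ∧ (∀ x : ℝ, ContinuousWithinAt u (Set.Ici x) x) ∧
    Tendsto u atBot (nhds 0)

/-- The step function associated to `u` and a finite partition `τ`. -/
noncomputable def stepApprox {H : Type*} [NormedAddCommGroup H]
    (u : ℝ → H) {n : ℕ} (τ : Fin n → ℝ) : ℝ → H :=
  fun x => ∑ j : Fin n,
    if τ j ≤ x ∧ (∀ k, j < k → x < τ k) then u (τ j) else 0


section Helpers

variable {H : Type*} [NormedAddCommGroup H]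

/-- evaluation of a step sum at a point in the `k`-th interval -/
lemma sum_ite_interval {α : Type*} [LinearOrder α] {K : ℕ} {t : Fin (K+1) → α}
    (ht : StrictMono t) (φ : Fin K → H) {x : α} {k : Fin K}
    (h1 : t k.castSucc ≤ x) (h2 : x < t k.succ) :
    (∑ i : Fin K, if t i.castSucc ≤ x ∧ x < t i.succ then φ i else 0) = φ k := by
  classical
  rw [Finset.sum_eq_single k]
  · rw [if_pos ⟨h1, h2⟩]
  · intro b _ hbk
    rw [if_neg]
    rintro ⟨hb1, hb2⟩
    rcases lt_or_gt_of_ne hbk with h | h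
    · exact absurd (hb2.trans_le (ht.monotone (Fin.succ_le_castSucc_iff.2 h))) (not_lt.2 h1)
    · exact absurd (h2.trans_le (ht.monotone (Fin.succ_le_castSucc_iff.2 h))) (not_lt.2 hb1)
  · intro h; exact absurd (Finset.mem_univ k) h

lemma atom_norm_le {p : ℝ} (hp : 1 ≤ p) {a : ℝ → H} (ha : IsUpAtom p a) (x : ℝ) :
    ‖a x‖ ≤ 1 := by
  classical
  obtain ⟨K, t, φ, htm, -, hsum, hval⟩ := ha
  have hφ : ∀ k, ‖φ k‖ ≤ 1 := by
    intro k
    have hle : ‖φ k‖ ^ p ≤ 1 := by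
      rw [← hsum]
      exact Finset.single_le_sum (f := fun k => ‖φ k‖ ^ p)
        (fun i _ => Real.rpow_nonneg (norm_nonneg _) p) (Finset.mem_univ k)
    by_contra hgt
    push_neg at hgt
    have h1 : (1:ℝ) < ‖φ k‖ ^ p :=
      (Real.one_lt_rpow_iff (norm_nonneg (φ k))).2 (Or.inl ⟨hgt, by linarith⟩)
    linarith
  rw [hval x]
  by_cases hk : ∃ k : Fin K, t k.castSucc ≤ (x : EReal) ∧ (x : EReal) < t k.succ
  · obtain ⟨k, h1, h2⟩ := hk
    rw [sum_ite_interval htm φ h1 h2]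
    exact hφ k
  · push_neg at hk
    rw [Finset.sum_eq_zero]
    · simp
    · intro i _
      rw [if_neg]
      rintro ⟨h1, h2⟩
      exact absurd (hk i h1) (not_le.2 h2)

variable [InnerProductSpace ℂ H] [CompleteSpace H]

lemma rep_hasSum {p : ℝ} (hp : 1 ≤ p) {u : ℝ → H} {c : ℕ → ℂ} {a : ℕ → ℝ → H}
    (h : IsUpRep p u c a) (x : ℝ) : HasSum (fun j => c j • a j x) (u x) := by
  obtain ⟨hc, ha, hconv⟩ := h
  have hsummable : Summable (fun j => c j • a j x) := by
    apply Summable.of_norm_bounded hc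
    intro j
    rw [norm_smul]
    calc ‖c j‖ * ‖a j x‖ ≤ ‖c j‖ * 1 :=
      mul_le_mul_of_nonneg_left (atom_norm_le hp (ha j) x) (norm_nonneg _)
    _ = ‖c j‖ := mul_one _
  have h1 := hsummable.hasSum.tendsto_sum_nat
  have h2 := hconv.tendsto_at x
  have h3 : u x = ∑' j, c j • a j x := tendsto_nhds_unique h2 h1
  rw [h3]; exact hsummable.hasSum

lemma rep_of_hasSum {p : ℝ} (hp : 1 ≤ p) {u : ℝ → H} {c : ℕ → ℂ} {a : ℕ → ℝ → H}
    (hc : Summable (fun j => ‖c j‖)) (ha : ∀ j, IsUpAtom p (a j))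
    (hu : ∀ x, HasSum (fun j => c j • a j x) (u x)) : IsUpRep p u c a := by
  refine ⟨hc, ha, ?_⟩
  have := tendstoUniformlyOn_tsum_nat (f := fun j x => c j • a j x) hc
    (s := Set.univ) (fun n x _ => by
      rw [norm_smul]
      calc ‖c n‖ * ‖a n x‖ ≤ ‖c n‖ * 1 :=
        mul_le_mul_of_nonneg_left (atom_norm_le hp (ha n) x) (norm_nonneg _)
      _ = ‖c n‖ := mul_one _)
  rw [tendstoUniformlyOn_univ] at this
  convert this using 1
  funext x
  exact ((hu x).tsum_eq).symm

end Helpers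


section StepEval
variable {H : Type*} [NormedAddCommGroup H]

lemma exists_step_index {m : ℕ} (τ : Fin m → ℝ) {x : ℝ} (h : ∃ j, τ j ≤ x) :
    ∃ J : Fin m, τ J ≤ x ∧ ∀ k, J < k → x < τ k := by
  classical
  obtain ⟨j0, hj0⟩ := h
  set S := Finset.univ.filter (fun j => τ j ≤ x) with hS
  have hne : S.Nonempty := ⟨j0, by simp [hS, hj0]⟩
  refine ⟨S.max' hne, ?_, ?_⟩
  · have := S.max'_mem hne
    simpa [hS] using this
  · intro k hk
    by_contra hx
    push_neg at hx
    have hkS : k ∈ S := by simp [hS, hx]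
    exact absurd (S.le_max' k hkS) (not_le.2 hk)

lemma stepApprox_of_forall_not (u : ℝ → H) {m : ℕ} {τ : Fin m → ℝ} {x : ℝ}
    (h : ∀ j, ¬ τ j ≤ x) : stepApprox u τ x = 0 := by
  unfold stepApprox
  exact Finset.sum_eq_zero (fun j _ => by rw [if_neg (fun hc => h j hc.1)])

lemma stepApprox_of_index (u : ℝ → H) {m : ℕ} {τ : Fin m → ℝ} {x : ℝ} {J : Fin m}
    (h1 : τ J ≤ x) (h2 : ∀ k, J < k → x < τ k) : stepApprox u τ x = u (τ J) := by
  unfold stepApprox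
  rw [Finset.sum_eq_single J]
  · rw [if_pos ⟨h1, h2⟩]
  · intro j _ hj
    rw [if_neg]
    rintro ⟨hj1, hj2⟩
    rcases lt_or_gt_of_ne hj with h | h
    · exact absurd h1 (not_le.2 (hj2 J h))
    · exact absurd hj1 (not_le.2 (h2 j h))
  · intro h; exact absurd (Finset.mem_univ J) h

end StepEval

section AtomSamp
variable {H : Type*} [NormedAddCommGroup H] [NormedSpace ℝ H]

set_option maxHeartbeats 1000000 in
lemma atom_stepApprox {p : ℝ} (hp : 1 ≤ p) {a : ℝ → H} (ha : IsUpAtom p a)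
    {m : ℕ} {τ : Fin m → ℝ} (hτ : StrictMono τ) :
    ∃ (lam : ℝ) (b : ℝ → H), 0 ≤ lam ∧ lam ≤ 1 ∧ IsUpAtom p b ∧
      ∀ x, stepApprox a τ x = lam • b x := by
  classical
  have hp0 : (0:ℝ) < p := lt_of_lt_of_le zero_lt_one hp
  rcases Nat.eq_zero_or_pos m with hm | hm
  · subst hm
    refine ⟨0, a, le_refl 0, zero_le_one, ha, fun x => ?_⟩
    rw [zero_smul]
    exact stepApprox_of_forall_not a (fun j => absurd j.isLt (by omega))
  obtain ⟨K, t, φ, htm, ht0, hsum, hval⟩ := ha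
  set f : Fin m → H := fun j => a (τ j) with hf
  set prd : Fin m → Fin m := fun j => ⟨j.val - 1, Nat.lt_of_le_of_lt (Nat.sub_le _ _) j.isLt⟩ with hprd
  set P : Fin m → Prop := fun j => j.val = 0 ∨ f j ≠ f (prd j) with hP
  set T : Finset (Fin m) := Finset.univ.filter P with hT
  have hm0 : (⟨0, hm⟩ : Fin m) ∈ T := by simp [hT, hP]
  -- key run lemma
  have key : ∀ (d : ℕ) (I jj : Fin m), jj.val = I.val + d →
      (∀ i : Fin m, I < i → i ≤ jj → i ∉ T) → f jj = f I := by
    intro d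
    induction d with
    | zero => intro I jj hval _; exact congrArg f (Fin.ext hval)
    | succ d ih =>
      intro I jj hvaleq hnot
      have hjjT : jj ∉ T := hnot jj (by rw [Fin.lt_def]; omega) le_rfl
      have hjP : ¬ P jj := by intro hc; exact hjjT (by simp [hT, hc])
      have heq : f jj = f (prd jj) := by
        by_contra hne
        exact hjP (Or.inr hne)
      have hprdval : (prd jj).val = I.val + d := by
        simp only [hprd]
        omega
      have hle : prd jj ≤ jj := by
        rw [Fin.le_def]
        simp only [hprd]
        omega
      rw [heq]
      exact ih I (prd jj) hprdval (fun i hi1 hi2 => hnot i hi1 (le_trans hi2 hle))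
  have keyJ : ∀ J : Fin m, ∃ I : Fin m, I ∈ T ∧ I ≤ J ∧ f J = f I ∧
      ∀ i ∈ T, i ≤ J → i ≤ I := by
    intro J
    set S := T.filter (· ≤ J) with hS
    have hSne : S.Nonempty :=
      ⟨⟨0, hm⟩, Finset.mem_filter.2 ⟨hm0, Fin.le_def.2 (Nat.zero_le _)⟩⟩
    set I := S.max' hSne with hI
    have hIS : I ∈ S := S.max'_mem hSne
    have hIT : I ∈ T := (Finset.mem_filter.1 hIS).1
    have hIJ : I ≤ J := by simpa using (Finset.mem_filter.1 hIS).2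
    refine ⟨I, hIT, hIJ, ?_, fun i hiT hiJ => S.le_max' i (Finset.mem_filter.2 ⟨hiT, hiJ⟩)⟩
    have hd : J.val = I.val + (J.val - I.val) := by
      have := Fin.le_def.1 hIJ; omega
    refine key (J.val - I.val) I J hd (fun i hi1 hi2 hiT => ?_)
    have := S.le_max' i (Finset.mem_filter.2 ⟨hiT, hi2⟩)
    rw [← hI] at this
    exact absurd hi1 (not_lt.2 this)
  -- value identification
  have hfval : ∀ (j : Fin m) (k : Fin K), t k.castSucc ≤ (τ j : EReal) →
      (τ j : EReal) < t k.succ → f j = φ k := by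
    intro j k h1 h2
    rw [hf]; simp only
    rw [hval (τ j), sum_ite_interval htm φ h1 h2]
  have hfzero : ∀ (j : Fin m),
      (¬ ∃ k : Fin K, t k.castSucc ≤ (τ j : EReal) ∧ (τ j : EReal) < t k.succ) → f j = 0 := by
    intro j hk
    push_neg at hk
    rw [hf]; simp only
    rw [hval (τ j), Finset.sum_eq_zero]
    intro i _
    rw [if_neg]
    rintro ⟨h1, h2⟩
    exact absurd h2 (not_lt.2 (hk i h1))
  -- the sum over T is at most 1
  have hTsum : ∑ j ∈ T, ‖f j‖ ^ p ≤ 1 := by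
    set T' := T.filter (fun j => ∃ k : Fin K, t k.castSucc ≤ (τ j : EReal) ∧ (τ j : EReal) < t k.succ) with hT'
    have h1 : ∑ j ∈ T, ‖f j‖ ^ p = ∑ j ∈ T', ‖f j‖ ^ p := by
      refine (Finset.sum_subset (Finset.filter_subset _ _) ?_).symm
      intro j hjT hjT'
      have : f j = 0 := hfzero j (fun hc => hjT' (Finset.mem_filter.2 ⟨hjT, hc⟩))
      rw [this, norm_zero, Real.zero_rpow (ne_of_gt hp0)]
    rw [h1]
    rcases Nat.eq_zero_or_pos K with hK | hK
    · have : T' = ∅ := by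
        rw [Finset.eq_empty_iff_forall_notMem]
        intro j hj
        obtain ⟨k, -⟩ := (Finset.mem_filter.1 hj).2
        exact absurd k.isLt (by omega)
      rw [this, Finset.sum_empty]
      exact zero_le_one
    set kf : Fin m → Fin K := fun j =>
      if h : ∃ k : Fin K, t k.castSucc ≤ (τ j : EReal) ∧ (τ j : EReal) < t k.succ
      then h.choose else ⟨0, hK⟩ with hkf
    have hkfspec : ∀ j ∈ T', t (kf j).castSucc ≤ (τ j : EReal) ∧ (τ j : EReal) < t (kf j).succ := by
      intro j hj
      have hex := (Finset.mem_filter.1 hj).2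
      simp only [hkf, dif_pos hex]
      exact hex.choose_spec
    have hfeq : ∀ j ∈ T', f j = φ (kf j) := fun j hj =>
      hfval j (kf j) (hkfspec j hj).1 (hkfspec j hj).2
    -- injectivity of kf on T'
    have hinj : ∀ j1 ∈ T', ∀ j2 ∈ T', kf j1 = kf j2 → j1 = j2 := by
      have core : ∀ j1 ∈ T', ∀ j2 ∈ T', j1 < j2 → kf j1 ≠ kf j2 := by
        intro j1 hj1 j2 hj2 hlt heq
        set k := kf j1 with hk
        have s1 := hkfspec j1 hj1
        have s2 := hkfspec j2 hj2
        rw [← heq] at s2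
        have hall : ∀ i : Fin m, j1 ≤ i → i ≤ j2 → f i = φ k := by
          intro i hi1 hi2
          refine hfval i k (le_trans s1.1 ?_) (lt_of_le_of_lt ?_ s2.2)
          · exact EReal.coe_le_coe_iff.2 (hτ.monotone hi1)
          · exact EReal.coe_le_coe_iff.2 (hτ.monotone hi2)
        have hj2T : j2 ∈ T := Finset.mem_filter.1 ((Finset.mem_filter.1 hj2).1) |>.1 |> fun _ => (Finset.mem_filter.1 hj2).1
        have hPj2 : P j2 := (Finset.mem_filter.1 hj2T).2
        have hj2ne : j2.val ≠ 0 := by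
          have := Fin.lt_def.1 hlt
          omega
        have hne : f j2 ≠ f (prd j2) := hPj2.resolve_left hj2ne
        have e1 : f j2 = φ k := hall j2 (le_of_lt hlt) le_rfl
        have e2 : f (prd j2) = φ k := by
          refine hall (prd j2) ?_ ?_
          · rw [Fin.le_def]
            simp only [hprd]
            have := Fin.lt_def.1 hlt
            omega
          · rw [Fin.le_def]
            simp only [hprd]
            omega
        rw [e1, e2] at hne
        exact hne rfl
      intro j1 hj1 j2 hj2 heq
      rcases lt_trichotomy j1 j2 with h | h | h
      · exact absurd heq (core j1 hj1 j2 hj2 h)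
      · exact h
      · exact absurd heq.symm (core j2 hj2 j1 hj1 h)
    calc ∑ j ∈ T', ‖f j‖ ^ p = ∑ j ∈ T', ‖φ (kf j)‖ ^ p :=
        Finset.sum_congr rfl (fun j hj => by rw [hfeq j hj])
      _ = ∑ k ∈ T'.image kf, ‖φ k‖ ^ p := (Finset.sum_image (f := fun k => ‖φ k‖ ^ p) hinj).symm
      _ ≤ ∑ k : Fin K, ‖φ k‖ ^ p := Finset.sum_le_sum_of_subset_of_nonneg
          (Finset.subset_univ _) (fun k _ _ => Real.rpow_nonneg (norm_nonneg _) p)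
      _ = 1 := hsum
  -- set up the candidate atom data
  set n := T.card with hn
  have hnpos : 0 < n := Finset.card_pos.2 ⟨⟨0, hm⟩, hm0⟩
  set e := T.orderIsoOfFin rfl with he
  have hem : StrictMono (fun i : Fin n => ((e i : Fin m))) := by
    intro i j hij
    exact Subtype.coe_lt_coe.2 (e.lt_iff_lt.2 hij)
  have heT : ∀ i : Fin n, ((e i : Fin m)) ∈ T := fun i => (e i).2
  set φ' : Fin n → H := fun i => f ((e i : Fin m)) with hφ'
  set t' : Fin (n+1) → EReal := fun i =>
    if h : i.val < n then ((τ ((e ⟨i.val, h⟩) : Fin m)) : EReal) else ⊤ with ht'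
  have ht'lt : ∀ (i : Fin (n+1)) (h : i.val < n),
      t' i = ((τ ((e ⟨i.val, h⟩) : Fin m)) : EReal) := by
    intro i h
    simp only [ht', dif_pos h]
  have ht'top : ∀ (i : Fin (n+1)), ¬ i.val < n → t' i = ⊤ := by
    intro i h
    simp only [ht', dif_neg h]
  have ht'cs : ∀ i : Fin n, t' i.castSucc = ((τ ((e i : Fin m))) : EReal) := by
    intro i
    rw [ht'lt i.castSucc (by simp)]
    congr 2
  have ht'm : StrictMono t' := by
    intro i j hij
    by_cases hj : j.val < n
    · have hi : i.val < n := lt_trans (Fin.lt_def.1 hij) hj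
      rw [ht'lt i hi, ht'lt j hj]
      rw [EReal.coe_lt_coe_iff]
      exact hτ (hem (by rw [Fin.lt_def]; exact Fin.lt_def.1 hij))
    · have hi : i.val < n := by
        have := Fin.lt_def.1 hij
        have := j.isLt
        omega
      rw [ht'lt i hi, ht'top j hj]
      exact EReal.coe_lt_top _
  have ht'0 : t' 0 ≠ ⊥ := by
    rw [ht'lt 0 (by simpa using hnpos)]
    exact EReal.coe_ne_bot _
  -- the main evaluation identity
  have main : ∀ x : ℝ, stepApprox a τ x =
      ∑ i : Fin n, if t' i.castSucc ≤ (x : EReal) ∧ (x : EReal) < t' i.succ then φ' i else 0 := by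
    intro x
    by_cases hx : ∃ j, τ j ≤ x
    · obtain ⟨J, hJ1, hJ2⟩ := exists_step_index τ hx
      obtain ⟨I, hIT, hIJ, hfJI, hImax⟩ := keyJ J
      set i0 : Fin n := e.symm ⟨I, hIT⟩ with hi0
      have hei0 : ((e i0 : Fin m)) = I := by
        rw [hi0]
        rw [OrderIso.apply_symm_apply]
      have lhs : stepApprox a τ x = f J := stepApprox_of_index a hJ1 hJ2
      have cond1 : t' i0.castSucc ≤ (x : EReal) := by
        rw [ht'cs i0, hei0]
        exact EReal.coe_le_coe_iff.2 (le_trans (hτ.monotone hIJ) hJ1)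
      have cond2 : (x : EReal) < t' i0.succ := by
        by_cases hsucc : i0.succ.val < n
        · rw [ht'lt i0.succ hsucc]
          set I' : Fin m := ((e ⟨i0.succ.val, hsucc⟩) : Fin m) with hI'
          have hI'T : I' ∈ T := heT _
          have hI'gt : I < I' := by
            rw [← hei0]
            refine hem ?_
            rw [Fin.lt_def]
            simp [hi0]
          have hJI' : J < I' := by
            by_contra hle
            push_neg at hle
            have := hImax I' hI'T hle
            exact absurd hI'gt (not_lt.2 this)
          exact EReal.coe_lt_coe_iff.2 (hJ2 I' hJI')
        · rw [ht'top i0.succ hsucc]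
          exact EReal.coe_lt_top _
      rw [lhs, sum_ite_interval ht'm φ' cond1 cond2, hφ']
      simp only
      rw [hei0, hfJI]
    · push_neg at hx
      rw [stepApprox_of_forall_not a (fun j => not_le.2 (hx j))]
      refine (Finset.sum_eq_zero ?_).symm
      intro i _
      rw [if_neg]
      rintro ⟨h1, -⟩
      rw [ht'cs i] at h1
      exact absurd (EReal.coe_le_coe_iff.1 h1) (not_le.2 (hx _))
  -- total mass
  set c : ℝ := ∑ i : Fin n, ‖φ' i‖ ^ p with hc
  have hceq : c = ∑ j ∈ T, ‖f j‖ ^ p := by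
    rw [hc]
    rw [← Finset.sum_coe_sort T (fun j => ‖f j‖ ^ p)]
    exact (Equiv.sum_comp e.toEquiv (fun j : {x // x ∈ T} => ‖f (j : Fin m)‖ ^ p))
  have hc1 : c ≤ 1 := by rw [hceq]; exact hTsum
  have hc0 : 0 ≤ c := Finset.sum_nonneg (fun i _ => Real.rpow_nonneg (norm_nonneg _) p)
  rcases eq_or_lt_of_le hc0 with hczero | hcpos
  · -- all values vanish
    have hzero : ∀ i : Fin n, φ' i = 0 := by
      intro i
      have h0 : ‖φ' i‖ ^ p = 0 := by
        have hle : ‖φ' i‖ ^ p ≤ 0 := by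
          rw [hczero, hc]
          exact Finset.single_le_sum (f := fun i => ‖φ' i‖ ^ p)
            (fun i _ => Real.rpow_nonneg (norm_nonneg _) p) (Finset.mem_univ i)
        exact le_antisymm hle (Real.rpow_nonneg (norm_nonneg _) p)
      have := (Real.rpow_eq_zero (norm_nonneg _) (ne_of_gt hp0)).1 h0
      exact norm_eq_zero.1 this
    refine ⟨0, a, le_refl 0, zero_le_one, ⟨K, t, φ, htm, ht0, hsum, hval⟩, fun x => ?_⟩
    rw [zero_smul, main x, Finset.sum_eq_zero]
    intro i _
    rw [hzero i, ite_self]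
  · -- normalize
    set lam : ℝ := c ^ (1/p) with hlam
    have hlampos : 0 < lam := Real.rpow_pos_of_pos hcpos _
    have hlamp : lam ^ p = c := by
      rw [hlam, one_div, Real.rpow_inv_rpow hc0 (ne_of_gt hp0)]
    have hlam1 : lam ≤ 1 := Real.rpow_le_one hc0 hc1 (by positivity)
    refine ⟨lam, fun x => ∑ i : Fin n,
        if t' i.castSucc ≤ (x : EReal) ∧ (x : EReal) < t' i.succ then lam⁻¹ • φ' i else 0,
      le_of_lt hlampos, hlam1, ?_, fun x => ?_⟩
    · refine ⟨n, t', fun i => lam⁻¹ • φ' i, ht'm, ht'0, ?_, fun x => rfl⟩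
      have : ∀ i : Fin n, ‖lam⁻¹ • φ' i‖ ^ p = c⁻¹ * ‖φ' i‖ ^ p := by
        intro i
        rw [norm_smul, norm_inv, Real.norm_of_nonneg (le_of_lt hlampos),
          Real.mul_rpow (by positivity) (norm_nonneg _),
          Real.inv_rpow (le_of_lt hlampos), hlamp]
      rw [Finset.sum_congr rfl (fun i _ => this i), ← Finset.mul_sum, ← hc,
        inv_mul_cancel₀ (ne_of_gt hcpos)]
    · rw [main x, Finset.smul_sum]
      refine Finset.sum_congr rfl (fun i _ => ?_)
      rw [smul_ite, smul_smul, mul_inv_cancel₀ (ne_of_gt hlampos), one_smul, smul_zero]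

end AtomSamp

section Fixed
variable {H : Type*} [NormedAddCommGroup H]

/-- A step function built on partition points all contained in the sample set is
fixed by sampling. -/
lemma atom_stepApprox_self {a : ℝ → H} {K : ℕ} {t : Fin (K+1) → EReal} {φ : Fin K → H}
    (ht0 : t 0 ≠ ⊥)
    (hval : ∀ x : ℝ, a x = ∑ k : Fin K,
      if t k.castSucc ≤ (x : EReal) ∧ (x : EReal) < t k.succ then φ k else 0)
    {m : ℕ} {τ : Fin m → ℝ} (hτ : StrictMono τ)
    (hpts : ∀ k : Fin (K+1), t k ≠ ⊤ → ∃ j, ((τ j : ℝ) : EReal) = t k) :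
    ∀ x, stepApprox a τ x = a x := by
  intro x
  by_cases hx : ∃ j, τ j ≤ x
  · obtain ⟨J, hJ1, hJ2⟩ := exists_step_index τ hx
    rw [stepApprox_of_index a hJ1 hJ2]
    set y := τ J with hy
    rw [hval y, hval x]
    refine Finset.sum_congr rfl (fun k _ => ?_)
    have hiff : (t k.castSucc ≤ (x : EReal) ∧ (x : EReal) < t k.succ) ↔
        (t k.castSucc ≤ (y : EReal) ∧ (y : EReal) < t k.succ) := by
      constructor
      · rintro ⟨h1, h2⟩
        have hne : t k.castSucc ≠ ⊤ := fun hc => by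
          rw [hc] at h1
          exact absurd h1 (not_le.2 (EReal.coe_lt_top x))
        obtain ⟨j0, hj0⟩ := hpts k.castSucc hne
        have hj0x : τ j0 ≤ x := by
          have := h1
          rw [← hj0] at this
          exact_mod_cast this
        have hj0J : j0 ≤ J := by
          by_contra hc
          push_neg at hc
          exact absurd hj0x (not_le.2 (hJ2 j0 hc))
        refine ⟨?_, lt_of_le_of_lt (EReal.coe_le_coe_iff.2 hJ1) h2⟩
        rw [← hj0]
        exact EReal.coe_le_coe_iff.2 (hτ.monotone hj0J)
      · rintro ⟨h1, h2⟩
        refine ⟨le_trans h1 (EReal.coe_le_coe_iff.2 hJ1), ?_⟩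
        by_contra hc
        push_neg at hc
        have hne : t k.succ ≠ ⊤ := fun htop => by
          rw [htop] at hc
          exact absurd hc (not_le.2 (EReal.coe_lt_top x))
        obtain ⟨j0, hj0⟩ := hpts k.succ hne
        have hj0x : τ j0 ≤ x := by
          rw [← hj0] at hc
          exact_mod_cast hc
        have hj0J : j0 ≤ J := by
          by_contra hcc
          push_neg at hcc
          exact absurd hj0x (not_le.2 (hJ2 j0 hcc))
        have : (τ j0 : EReal) ≤ (y : EReal) := EReal.coe_le_coe_iff.2 (hτ.monotone hj0J)
        rw [hj0] at this
        exact absurd h2 (not_lt.2 this)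
    rw [if_congr hiff rfl rfl]
  · push_neg at hx
    rw [stepApprox_of_forall_not a (fun j => not_le.2 (hx j))]
    rw [hval x]
    refine (Finset.sum_eq_zero (fun k _ => ?_)).symm
    rw [if_neg]
    rintro ⟨h1, h2⟩
    have hne : t k.castSucc ≠ ⊤ := fun hc => by
      rw [hc] at h1
      exact absurd h1 (not_le.2 (lt_of_lt_of_le (EReal.coe_lt_top x) le_top))
    obtain ⟨j0, hj0⟩ := hpts k.castSucc hne
    rw [← hj0] at h1
    exact absurd (EReal.coe_le_coe_iff.1 h1) (not_le.2 (hx j0))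

/-- `stepApprox` only depends on the sampled values. -/
lemma stepApprox_congr {u v : ℝ → H} {m : ℕ} {τ : Fin m → ℝ}
    (h : ∀ j, u (τ j) = v (τ j)) (x : ℝ) : stepApprox u τ x = stepApprox v τ x := by
  unfold stepApprox
  exact Finset.sum_congr rfl (fun j _ => by rw [h j])

lemma stepApprox_smul {𝕜 : Type*} [NormedField 𝕜] [NormedSpace 𝕜 H]
    (c : 𝕜) (w : ℝ → H) {m : ℕ} (τ : Fin m → ℝ) (x : ℝ) :
    stepApprox (fun y => c • w y) τ x = c • stepApprox w τ x := by
  unfold stepApprox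
  rw [Finset.smul_sum]
  exact Finset.sum_congr rfl (fun j _ => by rw [smul_ite, smul_zero])

lemma stepApprox_hasSum {u : ℝ → H} {g : ℕ → ℝ → H} {m : ℕ} {τ : Fin m → ℝ}
    (h : ∀ j : Fin m, HasSum (fun i => g i (τ j)) (u (τ j))) (x : ℝ) :
    HasSum (fun i => stepApprox (g i) τ x) (stepApprox u τ x) := by
  unfold stepApprox
  refine hasSum_sum (fun j _ => ?_)
  by_cases hc : τ j ≤ x ∧ (∀ k, j < k → x < τ k)
  · simp only [if_pos hc]
    exact h j
  · simp only [if_neg hc]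
    exact hasSum_zero

end Fixed

section Extra
variable {H : Type*} [NormedAddCommGroup H]

lemma exists_partition (F : Finset ℝ) (hFne : F.Nonempty) :
    ∃ (n : ℕ) (τ : Fin n → ℝ), 1 ≤ n ∧ StrictMono τ ∧ ∀ r ∈ F, r ∈ Set.range τ := by
  classical
  refine ⟨F.card, fun i => (F.orderIsoOfFin rfl i : ℝ), Finset.card_pos.2 hFne,
    fun i j hij => Subtype.coe_lt_coe.2 ((F.orderIsoOfFin rfl).lt_iff_lt.2 hij), ?_⟩
  intro r hr
  exact ⟨(F.orderIsoOfFin rfl).symm ⟨r, hr⟩, by simp⟩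

lemma interleave {γ : Type*} {δ : Type*} (c1 c2 : ℕ → γ) (a1 a2 : ℕ → δ) :
    ∃ (C : ℕ → γ) (A : ℕ → δ), (∀ k, C (2*k) = c1 k) ∧ (∀ k, C (2*k+1) = c2 k) ∧
      (∀ k, A (2*k) = a1 k) ∧ (∀ k, A (2*k+1) = a2 k) ∧
      (∀ i, (∃ k, C i = c1 k ∧ A i = a1 k) ∨ (∃ k, C i = c2 k ∧ A i = a2 k)) := by
  classical
  have hE : ∀ k : ℕ, Even (2*k) := fun k => ⟨k, two_mul k⟩
  have hO : ∀ k : ℕ, ¬ Even (2*k+1) := fun k h => (Nat.even_add_one.mp h) (even_two_mul k)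
  refine ⟨fun i => if Even i then c1 (i/2) else c2 (i/2),
    fun i => if Even i then a1 (i/2) else a2 (i/2), ?_, ?_, ?_, ?_, ?_⟩
  · intro k
    show (if Even (2*k) then c1 (2*k/2) else c2 (2*k/2)) = c1 k
    rw [if_pos (hE k), show 2 * k / 2 = k by omega]
  · intro k
    show (if Even (2*k+1) then c1 ((2*k+1)/2) else c2 ((2*k+1)/2)) = c2 k
    rw [if_neg (hO k), show (2 * k + 1) / 2 = k by omega]
  · intro k
    show (if Even (2*k) then a1 (2*k/2) else a2 (2*k/2)) = a1 k
    rw [if_pos (hE k), show 2 * k / 2 = k by omega]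
  · intro k
    show (if Even (2*k+1) then a1 ((2*k+1)/2) else a2 ((2*k+1)/2)) = a2 k
    rw [if_neg (hO k), show (2 * k + 1) / 2 = k by omega]
  · intro i
    by_cases h : Even i
    · refine Or.inl ⟨i/2, ?_, ?_⟩
      · show (if Even i then c1 (i/2) else c2 (i/2)) = c1 (i/2)
        rw [if_pos h]
      · show (if Even i then a1 (i/2) else a2 (i/2)) = a1 (i/2)
        rw [if_pos h]
    · refine Or.inr ⟨i/2, ?_, ?_⟩
      · show (if Even i then c1 (i/2) else c2 (i/2)) = c2 (i/2)
        rw [if_neg h]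
      · show (if Even i then a1 (i/2) else a2 (i/2)) = a2 (i/2)
        rw [if_neg h]

end Extra
set_option maxHeartbeats 1000000 in
/-- For every `u ∈ U^p(ℝ;H)` and every `ε > 0` there exists a finite
partition `P` of `ℝ` such that `‖u - u_P‖_{U^p(ℝ;H)} < ε`; moreover every finite
partition refining `P` has the same property. -/
theorem statement6 {H : Type*} [NormedAddCommGroup H] [InnerProductSpace ℂ H]
    [TopologicalSpace.SeparableSpace H] [CompleteSpace H]
    (p : ℝ) (hp : 1 ≤ p) (u : ℝ → H) (hu : MemUp p u) (ε : ℝ) (hε : 0 < ε) :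
    ∃ (n : ℕ) (τ : Fin n → ℝ), 1 ≤ n ∧ StrictMono τ ∧
      (MemUp p (u - stepApprox u τ) ∧ UpNorm p (u - stepApprox u τ) < ε) ∧
      (∀ (m : ℕ) (τ' : Fin m → ℝ), StrictMono τ' → Set.range τ ⊆ Set.range τ' →
        MemUp p (u - stepApprox u τ') ∧ UpNorm p (u - stepApprox u τ') < ε) := by
  classical
  obtain ⟨c, a, hrep⟩ := hu
  have hc : Summable (fun j => ‖c j‖) := hrep.1
  have hatoms : ∀ j, IsUpAtom p (a j) := hrep.2.1
  have hu_x : ∀ x, HasSum (fun i => c i • a i x) (u x) := rep_hasSum hp hrep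
  have hp0 : (0:ℝ) < p := lt_of_lt_of_le zero_lt_one hp
  -- choose a cutoff with small tail
  obtain ⟨N, hN⟩ : ∃ N : ℕ, ∑' k, ‖c (k + N)‖ < ε / 3 := by
    have htail := tendsto_sum_nat_add (fun j => ‖c j‖)
    have hev : ∀ᶠ N in atTop, ∑' k, ‖c (k + N)‖ < ε / 3 :=
      htail.eventually (eventually_lt_nhds (by linarith : (0:ℝ) < ε/3))
    exact hev.exists
  -- atom data for the first N atoms
  have hatoms' := hatoms
  choose Kf tf φf htmf ht0f hsumf hvalf using hatoms
  -- partition consisting of all real partition points of the first N atoms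
  obtain ⟨nn, τ, hnpos, hτm, hτrange⟩ := exists_partition
    (insert 0 ((Finset.range N).biUnion
      (fun j => Finset.image (fun k => (tf j k).toReal) Finset.univ)))
    ⟨0, Finset.mem_insert_self _ _⟩
  -- the main refinement claim
  have claim : ∀ (m : ℕ) (τ' : Fin m → ℝ), StrictMono τ' → Set.range τ ⊆ Set.range τ' →
      MemUp p (u - stepApprox u τ') ∧ UpNorm p (u - stepApprox u τ') < ε := by
    intro m τ' hτ' hsub
    -- atoms below N are fixed by sampling
    have hfix : ∀ j < N, ∀ x, stepApprox (a j) τ' x = a j x := by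
      intro j hj
      refine atom_stepApprox_self (ht0f j) (hvalf j) hτ' ?_
      intro k hk
      have hbot : tf j k ≠ ⊥ := by
        intro hb
        have hle := (htmf j).monotone (Fin.zero_le k)
        rw [hb] at hle
        exact (ht0f j) (le_bot_iff.1 hle)
      have hmem : (tf j k).toReal ∈ insert 0 ((Finset.range N).biUnion
          (fun j => Finset.image (fun k => (tf j k).toReal) Finset.univ)) :=
        Finset.mem_insert_of_mem (Finset.mem_biUnion.2
          ⟨j, Finset.mem_range.2 hj, Finset.mem_image.2 ⟨k, Finset.mem_univ k, rfl⟩⟩)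
      obtain ⟨i, hi⟩ := hsub (hτrange _ hmem)
      exact ⟨i, by rw [hi, EReal.coe_toReal hk hbot]⟩
    -- sample the tail atoms
    have hbm : ∀ i : ℕ, ∃ lam : ℝ, ∃ b : ℝ → H, 0 ≤ lam ∧ lam ≤ 1 ∧ IsUpAtom p b ∧
        ∀ x, stepApprox (a (i + N)) τ' x = lam • b x := fun i =>
      atom_stepApprox hp (hatoms' (i + N)) hτ'
    choose lam b hlam0 hlam1 hbatom hbeq using hbm
    have hcsum2 : Summable (fun i => ‖c (i + N)‖) := (summable_nat_add_iff N).2 hc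
    -- the tail part of u
    have hv_x : ∀ x, Summable (fun i => c (i + N) • a (i + N) x) := by
      intro x
      apply Summable.of_norm_bounded hcsum2
      intro i
      rw [norm_smul]
      calc ‖c (i + N)‖ * ‖a (i + N) x‖ ≤ ‖c (i + N)‖ * 1 :=
        mul_le_mul_of_nonneg_left (atom_norm_le hp (hatoms' (i + N)) x) (norm_nonneg _)
      _ = ‖c (i + N)‖ := mul_one _
    obtain ⟨v, hvsum⟩ : ∃ v : ℝ → H, ∀ x, HasSum (fun i => c (i + N) • a (i + N) x) (v x) :=
      ⟨_, fun x => (hv_x x).hasSum⟩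
    have hudecomp : ∀ x, u x = (∑ j ∈ Finset.range N, c j • a j x) + v x := by
      intro x
      rw [← (hu_x x).tsum_eq, ← (hvsum x).tsum_eq]
      exact (Summable.sum_add_tsum_nat_add N (hu_x x).summable).symm
    -- step approximation as a sum
    have hw_x : ∀ x, HasSum (fun i => c i • stepApprox (a i) τ' x) (stepApprox u τ' x) := by
      intro x
      have h1 : HasSum (fun i => stepApprox (fun y => c i • a i y) τ' x) (stepApprox u τ' x) :=
        stepApprox_hasSum (fun j => hu_x (τ' j)) x
      have h2 : (fun i => stepApprox (fun y => c i • a i y) τ' x)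
          = (fun i => c i • stepApprox (a i) τ' x) :=
        funext (fun i => stepApprox_smul (c i) (a i) τ' x)
      rwa [h2] at h1
    have hvw_x : ∀ x, Summable (fun i => c (i + N) • stepApprox (a (i + N)) τ' x) := by
      intro x
      apply Summable.of_norm_bounded hcsum2
      intro i
      rw [norm_smul, hbeq i x, norm_smul]
      calc ‖c (i + N)‖ * (‖lam i‖ * ‖b i x‖) ≤ ‖c (i + N)‖ * (1 * 1) := by
            refine mul_le_mul_of_nonneg_left ?_ (norm_nonneg _)
            refine mul_le_mul ?_ (atom_norm_le hp (hbatom i) x) (norm_nonneg _) zero_le_one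
            rw [Real.norm_of_nonneg (hlam0 i)]
            exact hlam1 i
      _ = ‖c (i + N)‖ := by ring
    obtain ⟨vw, hvwsum⟩ : ∃ vw : ℝ → H,
        ∀ x, HasSum (fun i => c (i + N) • stepApprox (a (i + N)) τ' x) (vw x) :=
      ⟨_, fun x => (hvw_x x).hasSum⟩
    have hwdecomp : ∀ x, stepApprox u τ' x = (∑ j ∈ Finset.range N, c j • a j x) + vw x := by
      intro x
      have h6 := Summable.sum_add_tsum_nat_add (f := fun i => c i • stepApprox (a i) τ' x) N
        (hw_x x).summable
      rw [(hw_x x).tsum_eq, (hvwsum x).tsum_eq] at h6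
      have h9 : ∑ j ∈ Finset.range N, c j • stepApprox (a j) τ' x
          = ∑ j ∈ Finset.range N, c j • a j x :=
        Finset.sum_congr rfl (fun j hj => by rw [hfix j (Finset.mem_range.1 hj) x])
      rw [← h6, h9]
    have hdiff : ∀ x, (u - stepApprox u τ') x = v x - vw x := by
      intro x
      simp only [Pi.sub_apply]
      rw [hudecomp x, hwdecomp x, add_sub_add_left_eq_sub]
    -- interleaved representation
    obtain ⟨C, A, hCE, hCO, hAE, hAO, hcases⟩ := interleave
      (fun k => c (k + N)) (fun k => -(c (k + N) * ((lam k : ℝ) : ℂ)))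
      (fun k => a (k + N)) b
    have hAatom : ∀ i, IsUpAtom p (A i) := by
      intro i
      rcases hcases i with ⟨k, -, hA⟩ | ⟨k, -, hA⟩
      · rw [hA]; exact hatoms' _
      · rw [hA]; exact hbatom _
    have hCnorm : ∀ k, ‖C (2 * k + 1)‖ ≤ ‖c (k + N)‖ := by
      intro k
      rw [hCO, norm_neg, norm_mul]
      calc ‖c (k + N)‖ * ‖((lam k : ℝ) : ℂ)‖ ≤ ‖c (k + N)‖ * 1 := by
            refine mul_le_mul_of_nonneg_left ?_ (norm_nonneg _)
            rw [Complex.norm_real, Real.norm_of_nonneg (hlam0 k)]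
            exact hlam1 k
      _ = ‖c (k + N)‖ := mul_one _
    have hoddsum : Summable (fun k => ‖C (2 * k + 1)‖) :=
      Summable.of_nonneg_of_le (fun k => norm_nonneg _) hCnorm hcsum2
    have heq1 : (fun k => ‖C (2 * k)‖) = fun k => ‖c (k + N)‖ :=
      funext (fun k => congrArg norm (hCE k))
    have hevensum : Summable (fun k => ‖C (2 * k)‖) := by
      rw [heq1]; exact hcsum2
    have hCsum : Summable (fun i => ‖C i‖) := Summable.even_add_odd (f := fun i => ‖C i‖) hevensum hoddsum
    have hCtsum : ∑' i, ‖C i‖ < ε := by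
      have h1 : HasSum (fun k => ‖C (2 * k)‖) (∑' k, ‖c (k + N)‖) := by
        rw [heq1]; exact hcsum2.hasSum
      have h2 : HasSum (fun k => ‖C (2 * k + 1)‖) (∑' k, ‖C (2 * k + 1)‖) := hoddsum.hasSum
      have h3 := HasSum.even_add_odd (f := fun i => ‖C i‖) h1 h2
      rw [h3.tsum_eq]
      have h4 : ∑' k, ‖C (2 * k + 1)‖ ≤ ∑' k, ‖c (k + N)‖ := Summable.tsum_le_tsum hCnorm hoddsum hcsum2
      linarith
    -- pointwise sums of the interleaved series
    have hx : ∀ x, HasSum (fun i => C i • A i x) ((u - stepApprox u τ') x) := by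
      intro x
      have heven : HasSum (fun k => C (2 * k) • A (2 * k) x) (v x) := by
        have heq2 : (fun k => C (2 * k) • A (2 * k) x) = fun k => c (k + N) • a (k + N) x :=
          funext (fun k => by rw [hCE, hAE])
        rw [heq2]
        exact hvsum x
      have hodd : HasSum (fun k => C (2 * k + 1) • A (2 * k + 1) x) (-vw x) := by
        have h7 : (fun k => C (2 * k + 1) • A (2 * k + 1) x)
            = fun k => -(c (k + N) • stepApprox (a (k + N)) τ' x) := by
          funext k
          rw [hCO, hAO, hbeq k x, neg_smul]
          congr 1
          rw [mul_smul, Complex.coe_smul]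
        rw [h7]
        exact (hvwsum x).neg
      have h8 := HasSum.even_add_odd (f := fun i => C i • A i x) heven hodd
      rw [hdiff x, sub_eq_add_neg]
      exact h8
    have hrep2 : IsUpRep p (u - stepApprox u τ') C A := rep_of_hasSum hp hCsum hAatom hx
    refine ⟨⟨C, A, hrep2⟩, ?_⟩
    have hmem : ∑' i, ‖C i‖ ∈
        { r | ∃ c a, IsUpRep p (u - stepApprox u τ') c a ∧ r = ∑' j, ‖c j‖ } := ⟨C, A, hrep2, rfl⟩
    have hbdd : BddBelow { r | ∃ c a, IsUpRep p (u - stepApprox u τ') c a ∧ r = ∑' j, ‖c j‖ } := by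
      refine ⟨0, fun r hr => ?_⟩
      obtain ⟨c', a', -, rfl⟩ := hr
      exact tsum_nonneg (fun i => norm_nonneg _)
    calc UpNorm p (u - stepApprox u τ') ≤ ∑' i, ‖C i‖ := csInf_le hbdd hmem
      _ < ε := hCtsum
  exact ⟨nn, τ, hnpos, hτm, claim nn τ hτm (subset_refl _), claim⟩
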